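/- arXiv:1011.3473 — 7 statements merged into one kernel-verified Lean document; each statement's English description precedes it below -/
import Mathlib

section
/- Let L be a Lie algebra over ℂ and let e, h, f ∈ L satisfy the sl₂-triple relations [h,e] = 2e, [h,f] = −2f, [e,f] = h. Then for every natural number m, in the universal enveloping algebra U(L) one has (ad e)^m(f^m) − m!·h(h−1)(h−2)⋯(h−m+1) ∈ U(L)·e, where U(L)·e is the left ideal generated by (the image of) e, ad e is the operator x ↦ ex − xe on U(L), and h(h−1)⋯(h−m+1) denotes the product of the m elements h − i (0 ≤ i ≤ m−1) of U(L). -/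
/-- The canonical embedding of a Lie algebra into its universal enveloping algebra. -/
noncomputable def ιU {L : Type*} [LieRing L] [LieAlgebra ℂ L] (x : L) :
    UniversalEnvelopingAlgebra ℂ L :=
  UniversalEnvelopingAlgebra.ι ℂ x

section Aux

variable {A : Type*} [Ring A]

/-- `Pp H a j = (H - a)(H - (a+1)) ⋯ (H - (a+j-1))`. -/
def Pp (H : A) (a j : ℕ) : A :=
  ((List.range j).map (fun i : ℕ => H - ((a + i : ℕ) : A))).prod

lemma Pp_succ (H : A) (a j : ℕ) : Pp H a (j + 1) = (H - (a : A)) * Pp H (a + 1) j := by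
  rw [Pp, Pp, List.range_succ_eq_map, List.map_cons, List.prod_cons, List.map_map]
  have h1 : ((fun i : ℕ => H - ((a + i : ℕ) : A)) ∘ Nat.succ)
      = fun i : ℕ => H - ((a + 1 + i : ℕ) : A) := by
    funext i
    simp only [Function.comp_apply]
    congr 2
    omega
  rw [h1]
  norm_num

variable {E H F : A}

lemma cast_mul_right (x : A) (c : ℕ) : x * (c : A) = c • x := by
  rw [((Nat.cast_commute c x).eq).symm, nsmul_eq_mul]

lemma cast_mul_left (x : A) (c : ℕ) : (c : A) * x = c • x := by
  rw [nsmul_eq_mul]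

lemma E_mul_sub (hHE : H * E = E * H + (2 : ℕ) • E) (c : ℕ) :
    E * (H - (c : A)) = (H - ((c + 2 : ℕ) : A)) * E := by
  have h1 : E * H = H * E - (2 : ℕ) • E := by rw [hHE]; abel
  rw [mul_sub, sub_mul, h1, cast_mul_right, cast_mul_left]
  module

lemma E_Pp (hHE : H * E = E * H + (2 : ℕ) • E) (j : ℕ) :
    ∀ a, E * Pp H a j = Pp H (a + 2) j * E := by
  induction j with
  | zero => intro a; simp [Pp]
  | succ j ih =>
    intro a
    rw [Pp_succ, Pp_succ, ← mul_assoc, E_mul_sub hHE, mul_assoc, ih (a + 1), ← mul_assoc]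

lemma E_F_pow (hHF : H * F = F * H - (2 : ℕ) • F) (hEF : E * F = F * E + H) (a : ℕ) :
    E * F ^ (a + 1) - F ^ (a + 1) * E = (a + 1) • (F ^ a * (H - (a : A))) := by
  induction a with
  | zero => simp [hEF]
  | succ a ih =>
    have key : E * F ^ (a + 1 + 1) - F ^ (a + 1 + 1) * E
        = (E * F ^ (a + 1) - F ^ (a + 1) * E) * F + F ^ (a + 1) * (E * F - F * E) := by
      rw [pow_succ F (a + 1)]
      noncomm_ring
    have hc : (H - (a : A)) * F = F * (H - ((a + 2 : ℕ) : A)) := by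
      rw [sub_mul, hHF, mul_sub, cast_mul_left, cast_mul_right]
      have : ((a : ℕ) + 2) • F = a • F + (2 : ℕ) • F := by rw [add_nsmul]
      rw [this]
      abel
    rw [key, ih, hEF, add_sub_cancel_left, smul_mul_assoc, mul_assoc, hc,
      ← mul_assoc, ← pow_succ]
    rw [mul_sub, mul_sub, cast_mul_right, cast_mul_right]
    module

lemma main_ind (hHE : H * E = E * H + (2 : ℕ) • E) (hHF : H * F = F * H - (2 : ℕ) • F)
    (hEF : E * F = F * E + H) (j : ℕ) :
    ∀ a, ∃ B : A, (fun x => E * x - x * E)^[j] (F ^ (a + j))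
      = (a + j).descFactorial j • (F ^ a * Pp H a j) + B * E := by
  induction j with
  | zero => intro a; exact ⟨0, by simp [Pp]⟩
  | succ j ih =>
    intro a
    obtain ⟨B, hB⟩ := ih (a + 1)
    have hx : a + (j + 1) = a + 1 + j := by omega
    refine ⟨((a + 1 + j).descFactorial j) •
        (F ^ (a + 1) * (Pp H (a + 3) j - Pp H (a + 1) j)) + (E * B - B * E), ?_⟩
    rw [Function.iterate_succ_apply', hx, hB]
    set d := (a + 1 + j).descFactorial j with hd
    set P1 := Pp H (a + 1) j with hP1
    set P3 := Pp H (a + 3) j with hP3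
    have stepA : E * (d • (F ^ (a + 1) * P1) + B * E) - (d • (F ^ (a + 1) * P1) + B * E) * E
        = d • (E * (F ^ (a + 1) * P1) - (F ^ (a + 1) * P1) * E) + (E * B - B * E) * E := by
      simp only [mul_add, add_mul, mul_sub, sub_mul, smul_sub, smul_add, mul_smul_comm,
        smul_mul_assoc, mul_assoc]
      abel
    have stepB : E * (F ^ (a + 1) * P1) - (F ^ (a + 1) * P1) * E
        = (E * F ^ (a + 1) - F ^ (a + 1) * E) * P1 + F ^ (a + 1) * (E * P1 - P1 * E) := by
      simp only [sub_mul, mul_sub, mul_assoc]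
      abel
    have hEP : E * P1 = P3 * E := by
      rw [hP1, hP3]
      have h0 := E_Pp hHE j (a + 1)
      rwa [show a + 1 + 2 = a + 3 by omega] at h0
    have stepC : E * P1 - P1 * E = (P3 - P1) * E := by
      rw [hEP, sub_mul]
    have stepD : (E * F ^ (a + 1) - F ^ (a + 1) * E) * P1
        = (a + 1) • (F ^ a * Pp H a (j + 1)) := by
      rw [E_F_pow hHF hEF, smul_mul_assoc, mul_assoc, hP1, ← Pp_succ]
    have hcoef : (a + 1 + j).descFactorial (j + 1) = (a + 1) * d := by
      rw [hd, Nat.descFactorial_succ]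
      congr 1
      omega
    show E * (d • (F ^ (a + 1) * P1) + B * E) - (d • (F ^ (a + 1) * P1) + B * E) * E = _
    rw [stepA, stepB, stepC, stepD, hcoef]
    simp only [smul_add, smul_smul, add_mul, smul_mul_assoc, mul_sub, sub_mul, mul_assoc]
    module

end Aux

/-- **Lemma B.2(1) (lem-poly).**  For an `sl₂`-triple `(e, h, f)` in a Lie algebra `L` over `ℂ`,
in `U(L)` one has `(ad e)^m (f^m) − m! ⬝ h(h−1)⋯(h−m+1) ∈ U(L)·e`. -/
theorem adE_pow_F_pow_mem_left_ideal
    {L : Type*} [LieRing L] [LieAlgebra ℂ L] (e h f : L)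
    (hhe : ⁅h, e⁆ = (2 : ℂ) • e) (hhf : ⁅h, f⁆ = (-2 : ℂ) • f) (hef : ⁅e, f⁆ = h)
    (m : ℕ) :
    ∃ B : UniversalEnvelopingAlgebra ℂ L,
      (fun x => ιU e * x - x * ιU e)^[m] ((ιU f) ^ m)
          - m.factorial •
              ((List.range m).map
                (fun i : ℕ => ιU h - (i : UniversalEnvelopingAlgebra ℂ L))).prod
        = B * ιU e := by
  set E := ιU e with hE
  set H := ιU h with hH
  set F := ιU f with hF
  have key : ∀ x y : L, ιU ⁅x, y⁆ = ιU x * ιU y - ιU y * ιU x := by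
    intro x y
    rw [ιU, ιU, ιU, ← Ring.lie_def]
    simp
  have lie_he : H * E - E * H = (2 : ℂ) • E := by
    have h0 := key h e
    rw [hhe] at h0
    have h1 : ιU ((2 : ℂ) • e) = (2 : ℂ) • ιU e := by rw [ιU, ιU]; simp
    rw [h1] at h0
    rw [hE, hH]
    exact h0.symm
  have lie_hf : H * F - F * H = (-2 : ℂ) • F := by
    have h0 := key h f
    rw [hhf] at h0
    have h1 : ιU ((-2 : ℂ) • f) = (-2 : ℂ) • ιU f := by rw [ιU, ιU]; simp
    rw [h1] at h0
    rw [hF, hH]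
    exact h0.symm
  have lie_ef : E * F - F * E = H := by
    have h0 := key e f
    rw [hef] at h0
    rw [hE, hF, hH]
    exact h0.symm
  have hHE : H * E = E * H + (2 : ℕ) • E := by
    have h2 : (2 : ℂ) • E = (2 : ℕ) • E := by
      rw [show ((2 : ℂ)) = ((2 : ℕ) : ℂ) by norm_num, Nat.cast_smul_eq_nsmul]
    rw [h2] at lie_he
    exact sub_eq_iff_eq_add'.mp lie_he
  have hHF : H * F = F * H - (2 : ℕ) • F := by
    have h2 : (-2 : ℂ) • F = -((2 : ℕ) • F) := by
      rw [show ((-2 : ℂ)) = -((2 : ℕ) : ℂ) by norm_num, neg_smul, Nat.cast_smul_eq_nsmul]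
    rw [h2] at lie_hf
    rw [sub_eq_iff_eq_add] at lie_hf
    rw [lie_hf]
    abel
  have hEF : E * F = F * E + H := by
    rw [sub_eq_iff_eq_add] at lie_ef
    rw [lie_ef]
    abel
  obtain ⟨B, hB⟩ := main_ind hHE hHF hEF m 0
  simp only [Nat.zero_add, Nat.descFactorial_self, pow_zero, one_mul] at hB
  refine ⟨B, ?_⟩
  have hPp : Pp H 0 m
      = ((List.range m).map (fun i : ℕ => H - (i : UniversalEnvelopingAlgebra ℂ L))).prod := by
    simp [Pp]
  rw [hB, hPp]
  abel
end

section
/- Let L be a Lie algebra over ℂ and let e, h, f ∈ L satisfy [h,e] = 2e, [h,f] = −2f, [e,f] = h. Let n > r > 0 be integers and let Y ∈ U(L). Then in the universal enveloping algebra U(L) there exist elements A, B ∈ U(L) such that (ad e)ⁿ(f^r·Y) = f·A + (n!/(n−r)!) · (h−n+1)(h−n+2)⋯(h−n+r) · (ad e)^{n−r}(Y) + B·e, where ad e is the operator x ↦ ex − xe on U(L) and (h−n+1)⋯(h−n+r) is the product of the r elements h−n+j (1 ≤ j ≤ r) of U(L). -/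
section Aux

variable {L : Type*} [LieRing L] [LieAlgebra ℂ L]

/-- `ad e` on `U(L)` as a linear endomorphism. -/
private noncomputable def adE (e : L) :
    Module.End ℂ (UniversalEnvelopingAlgebra ℂ L) :=
  LinearMap.mulLeft ℂ (ιU e) - LinearMap.mulRight ℂ (ιU e)

private lemma adE_apply (e : L) (x : UniversalEnvelopingAlgebra ℂ L) :
    adE e x = ιU e * x - x * ιU e := rfl

private lemma ι_bracket (x y : L) :
    ιU ⁅x, y⁆ = ιU x * ιU y - ιU y * ιU x := by
  show UniversalEnvelopingAlgebra.ι ℂ ⁅x, y⁆ = _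
  letI := LieRing.ofAssociativeRing (A := UniversalEnvelopingAlgebra ℂ L)
  rw [LieHom.map_lie, Ring.lie_def]; rfl

private lemma adE_mul (e : L) (x y : UniversalEnvelopingAlgebra ℂ L) :
    adE e (x * y) = adE e x * y + x * adE e y := by
  simp only [adE_apply]; noncomm_ring

private lemma adE_one (e : L) : adE e (1 : UniversalEnvelopingAlgebra ℂ L) = 0 := by
  simp [adE_apply]

private lemma adE_e (e : L) : adE e (ιU e) = 0 := by
  simp [adE_apply]

private lemma adE_F (e h f : L) (hef : ⁅e, f⁆ = h) : adE e (ιU f) = ιU h := by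
  rw [adE_apply, ← ι_bracket, hef]

private lemma adE_H (e h : L) (hhe : ⁅h, e⁆ = (2 : ℂ) • e) :
    adE e (ιU h) = -((2 : ℂ) • ιU e) := by
  rw [adE_apply, ← ι_bracket, ← lie_skew, hhe]
  show UniversalEnvelopingAlgebra.ι ℂ (-((2:ℂ) • e)) = _
  simp [ιU]

private lemma pow_succ_apply (e : L) (n : ℕ) (x : UniversalEnvelopingAlgebra ℂ L) :
    (adE e ^ (n + 1)) x = adE e ((adE e ^ n) x) := by
  rw [pow_succ', Module.End.mul_apply]

private lemma e_swap (e : L) (x : UniversalEnvelopingAlgebra ℂ L) :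
    ιU e * x = x * ιU e + adE e x := by
  rw [adE_apply]; abel

private lemma HmulF (e h f : L) (hhf : ⁅h, f⁆ = (-2 : ℂ) • f) (c : ℂ) :
    (ιU h - c • 1) * ιU f = ιU f * (ιU h - (c + 2) • 1) := by
  have h1 : ιU h * ιU f - ιU f * ιU h = (-2 : ℂ) • ιU f := by
    rw [← ι_bracket, hhf]
    show UniversalEnvelopingAlgebra.ι ℂ ((-2:ℂ) • f) = _
    simp [ιU]
  have h2 : ιU h * ιU f = ιU f * ιU h + (-2 : ℂ) • ιU f := by
    rw [← h1]; abel
  rw [sub_mul, mul_sub, h2, smul_mul_assoc, mul_smul_comm, one_mul, mul_one]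
  module

/-- Key recursion: `ad^{n+1}(f·Z) ≡ f·ad^{n+1}Z + (n+1)(h-n)·adⁿZ  mod U·e`. -/
private lemma adE_key (e h f : L) (hhe : ⁅h, e⁆ = (2 : ℂ) • e) (hef : ⁅e, f⁆ = h)
    (n : ℕ) (Z : UniversalEnvelopingAlgebra ℂ L) :
    ∃ B, (adE e ^ (n + 1)) (ιU f * Z)
      = ιU f * (adE e ^ (n + 1)) Z
        + ((n : ℂ) + 1) • ((ιU h - (n : ℂ) • 1) * (adE e ^ n) Z)
        + B * ιU e := by
  induction n with
  | zero =>
      refine ⟨0, ?_⟩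
      rw [pow_one, adE_mul, adE_F e h f hef]
      simp
      abel
  | succ n ih =>
      obtain ⟨B, hB⟩ := ih
      refine ⟨((n : ℂ) + 1) • ((-2 : ℂ) • (adE e ^ n) Z) + adE e B, ?_⟩
      rw [pow_succ_apply e (n + 1) (ιU f * Z), hB, map_add, map_add, adE_mul, map_smul,
        adE_mul, adE_mul, adE_F e h f hef, adE_e, mul_zero, add_zero,
        map_sub, map_smul, adE_H e h hhe, adE_one, smul_zero, sub_zero,
        neg_mul, smul_mul_assoc, e_swap e ((adE e ^ n) Z)]
      simp only [← pow_succ_apply]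
      push_cast
      simp only [sub_mul, smul_mul_assoc, one_mul, mul_add, add_mul, neg_mul, smul_add,
        smul_smul, smul_neg, neg_smul]
      module

/-- Main induction. -/
private lemma adE_main (e h f : L) (hhe : ⁅h, e⁆ = (2 : ℂ) • e)
    (hhf : ⁅h, f⁆ = (-2 : ℂ) • f) (hef : ⁅e, f⁆ = h) :
    ∀ (r n : ℕ), r ≤ n → ∀ Y : UniversalEnvelopingAlgebra ℂ L, ∃ A B,
      (adE e ^ n) (ιU f ^ r * Y)
        = ιU f * A
          + ((n.descFactorial r : ℕ) : ℂ) •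
              ((((List.range r).map
                  (fun j : ℕ => ιU h - ((n : ℂ) - ((j : ℂ) + 1)) • 1)).prod)
                * (adE e ^ (n - r)) Y)
          + B * ιU e := by
  intro r
  induction r with
  | zero =>
      intro n _ Y
      exact ⟨0, 0, by simp⟩
  | succ r ih =>
      intro n hn Y
      obtain ⟨m, rfl⟩ : ∃ m, n = m + 1 := ⟨n - 1, by omega⟩
      have hrm : r ≤ m := by omega
      obtain ⟨B₀, hB₀⟩ := adE_key e h f hhe hef m (ιU f ^ r * Y)
      obtain ⟨A₁, B₁, h₁⟩ := ih m hrm Y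
      refine ⟨(adE e ^ (m + 1)) (ιU f ^ r * Y)
              + ((m : ℂ) + 1) • ((ιU h - ((m : ℂ) + 2) • 1) * A₁),
             ((m : ℂ) + 1) • ((ιU h - (m : ℂ) • 1) * B₁) + B₀, ?_⟩
      rw [pow_succ' (ιU f) r, mul_assoc, hB₀, h₁]
      -- normalize the RHS pieces
      rw [Nat.succ_sub_succ]
      rw [Nat.succ_descFactorial_succ]
      rw [List.range_succ_eq_map, List.map_cons, List.prod_cons, List.map_map]
      have hhead : (ιU h - (((m + 1 : ℕ) : ℂ) - (((0 : ℕ) : ℂ) + 1)) • 1)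
          = ιU h - (m : ℂ) • 1 := by
        norm_num
      have htail : ((fun j : ℕ => ιU h - (((m + 1 : ℕ) : ℂ) - ((j : ℂ) + 1)) • 1) ∘ Nat.succ)
          = fun j : ℕ => ιU h - ((m : ℂ) - ((j : ℂ) + 1)) • 1 := by
        funext j
        have : (((m + 1 : ℕ) : ℂ) - (((Nat.succ j : ℕ) : ℂ) + 1)) = (m : ℂ) - ((j : ℂ) + 1) := by
          push_cast; ring
        simp only [Function.comp_apply, this]
      rw [hhead, htail]
      have hsc : (((m + 1) * m.descFactorial r : ℕ) : ℂ)
          = ((m : ℂ) + 1) * ((m.descFactorial r : ℕ) : ℂ) := by push_cast; ring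
      rw [hsc]
      -- expand
      rw [mul_add, mul_add]
      rw [← mul_assoc (ιU h - (m : ℂ) • 1) (ιU f) A₁, HmulF e h f hhf, mul_assoc]
      set Q := ((List.range r).map (fun j : ℕ => ιU h - ((m : ℂ) - ((j : ℂ) + 1)) • 1)).prod
      set W := (adE e ^ (m - r)) Y
      simp only [mul_smul_comm, smul_smul, ← mul_assoc]
      simp only [mul_add, add_mul, smul_add, smul_mul_assoc, mul_smul_comm, smul_smul]
      simp only [← mul_assoc]
      module

end Aux

/-- **Lemma B.2(3) (lem-poly).** -/
theorem adE_pow_F_pow_mul_mem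
    {L : Type*} [LieRing L] [LieAlgebra ℂ L] (e h f : L)
    (hhe : ⁅h, e⁆ = (2 : ℂ) • e) (hhf : ⁅h, f⁆ = (-2 : ℂ) • f) (hef : ⁅e, f⁆ = h)
    (n r : ℕ) (hr : 0 < r) (hrn : r < n) (Y : UniversalEnvelopingAlgebra ℂ L) :
    ∃ A B : UniversalEnvelopingAlgebra ℂ L,
      (fun x => ιU e * x - x * ιU e)^[n] ((ιU f) ^ r * Y)
        = ιU f * A
          + (n.descFactorial r) •
              (((List.range r).map
                  (fun j : ℕ => ιU h - ((n : ℂ) - ((j : ℂ) + 1)) • 1)).prod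
                * (fun x => ιU e * x - x * ιU e)^[n - r] Y)
          + B * ιU e := by
  obtain ⟨A, B, hAB⟩ := adE_main e h f hhe hhf hef r n hrn.le Y
  refine ⟨A, B, ?_⟩
  have hfun : (fun x : UniversalEnvelopingAlgebra ℂ L => ιU e * x - x * ιU e) = ⇑(adE e) := by
    funext x; rw [adE_apply]
  rw [hfun, ← Module.End.pow_apply, ← Module.End.pow_apply, hAB, Nat.cast_smul_eq_nsmul]
end

section
/- For all natural numbers r ≤ n and every x ∈ ℂ, the following identity of falling factorials holds: (x−n+r)(x−n+r−1)⋯(x−n+1) = Σ_{i=0}^{r} (−1)^i · binom(r,i) · (n−r)(n−r−1)⋯(n−r−i+1) · (x−i)(x−i−1)⋯(x−r+1); that is, ∏_{j=0}^{r−1}(x−n+r−j) = Σ_{i=0}^{r} (−1)^i binom(r,i) · descFactorial(n−r, i) · ∏_{j=0}^{r−i−1}(x−i−j), where descFactorial(n−r, i) = (n−r)(n−r−1)⋯(n−r−i+1) is the descending factorial (equal to 0 when i > n−r) and the empty product equals 1. -/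
lemma cast_descFactorial (m i : ℕ) :
    (m.descFactorial i : ℂ) = ∏ j ∈ Finset.range i, ((m : ℂ) - (j : ℂ)) := by
  induction i with
  | zero => simp
  | succ i ih =>
    rw [Finset.prod_range_succ, ← ih, Nat.descFactorial_succ, Nat.cast_mul]
    rcases le_or_gt i m with h | h
    · rw [Nat.cast_sub h]; ring
    · have h0 : (m.descFactorial i : ℂ) = 0 := by
        rw [Nat.descFactorial_eq_zero_iff_lt.mpr h]; simp
      rw [h0]; ring

lemma aux_vandermonde (r : ℕ) : ∀ x y : ℂ,
    ∏ j ∈ Finset.range r, (x - y - (j : ℂ)) =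
      ∑ i ∈ Finset.range (r + 1),
        (-1) ^ i * (r.choose i : ℂ) * (∏ j ∈ Finset.range i, (y - (j : ℂ))) *
          ∏ j ∈ Finset.range (r - i), (x - (i : ℂ) - (j : ℂ)) := by
  induction r with
  | zero => intro x y; simp
  | succ r ih =>
    intro x y
    rw [Finset.sum_range_succ']
    have hT : ∀ i ∈ Finset.range (r + 1),
        (-1) ^ (i+1) * ((r+1).choose (i+1) : ℂ) * (∏ j ∈ Finset.range (i+1), (y - (j : ℂ))) *
          ∏ j ∈ Finset.range (r + 1 - (i+1)), (x - ((i+1 : ℕ) : ℂ) - (j : ℂ))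
        = (-1) ^ (i+1) * (r.choose (i+1) : ℂ) * (∏ j ∈ Finset.range (i+1), (y - (j : ℂ))) *
            (∏ j ∈ Finset.range (r + 1 - (i+1)), (x - ((i+1 : ℕ) : ℂ) - (j : ℂ)))
          + (-1) * ((-1) ^ i * (r.choose i : ℂ) *
              ((∏ j ∈ Finset.range i, ((y-1) - (j : ℂ))) * y) *
              ∏ j ∈ Finset.range (r - i), ((x-1) - (i:ℂ) - (j : ℂ))) := by
      intro i hi
      have hP : ∏ j ∈ Finset.range (i+1), (y - (j : ℂ))
          = (∏ j ∈ Finset.range i, ((y-1) - (j : ℂ))) * y := by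
        rw [Finset.prod_range_succ']
        simp only [Nat.cast_zero, sub_zero]
        congr 1
        exact Finset.prod_congr rfl (fun j _ => by push_cast; ring)
      have hQ : ∏ j ∈ Finset.range (r + 1 - (i+1)), (x - ((i+1 : ℕ) : ℂ) - (j : ℂ))
          = ∏ j ∈ Finset.range (r - i), ((x-1) - (i:ℂ) - (j : ℂ)) := by
        rw [Nat.succ_sub_succ]
        exact Finset.prod_congr rfl (fun j _ => by push_cast; ring)
      rw [Nat.choose_succ_succ, Nat.cast_add, hP, hQ]
      ring
    rw [Finset.sum_congr rfl hT, Finset.sum_add_distrib]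
    -- second summand: = -y * L
    have hS1 : ∑ i ∈ Finset.range (r + 1),
        (-1) * ((-1) ^ i * (r.choose i : ℂ) *
          ((∏ j ∈ Finset.range i, ((y-1) - (j : ℂ))) * y) *
          ∏ j ∈ Finset.range (r - i), ((x-1) - (i:ℂ) - (j : ℂ)))
        = (-y) * ∏ j ∈ Finset.range r, (x - y - (j : ℂ)) := by
      have h2 := ih (x-1) (y-1)
      have h3 : ∏ j ∈ Finset.range r, ((x-1) - (y-1) - (j : ℂ))
          = ∏ j ∈ Finset.range r, (x - y - (j : ℂ)) :=
        Finset.prod_congr rfl (fun j _ => by ring)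
      rw [← h3, h2, Finset.mul_sum]
      exact Finset.sum_congr rfl (fun i _ => by ring)
    -- first summand plus the i=0 term: = (x - r) * L
    have hS2 : (∑ i ∈ Finset.range (r + 1),
        (-1) ^ (i+1) * (r.choose (i+1) : ℂ) * (∏ j ∈ Finset.range (i+1), (y - (j : ℂ))) *
          (∏ j ∈ Finset.range (r + 1 - (i+1)), (x - ((i+1 : ℕ) : ℂ) - (j : ℂ))))
        + (-1) ^ 0 * ((r+1).choose 0 : ℂ) * (∏ j ∈ Finset.range 0, (y - (j : ℂ))) *
            ∏ j ∈ Finset.range (r + 1 - 0), (x - ((0 : ℕ) : ℂ) - (j : ℂ))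
        = (x - (r : ℂ)) * ∏ j ∈ Finset.range r, (x - y - (j : ℂ)) := by
      have e1 : ((-1 : ℂ)) ^ 0 * ((r+1).choose 0 : ℂ) * (∏ j ∈ Finset.range 0, (y - (j : ℂ))) *
            ∏ j ∈ Finset.range (r + 1 - 0), (x - ((0 : ℕ) : ℂ) - (j : ℂ))
          = (-1 : ℂ) ^ 0 * (r.choose 0 : ℂ) * (∏ j ∈ Finset.range 0, (y - (j : ℂ))) *
            ∏ j ∈ Finset.range (r + 1 - 0), (x - ((0 : ℕ) : ℂ) - (j : ℂ)) := by simp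
      have estep : ∑ i ∈ Finset.range (r + 2),
          (-1 : ℂ) ^ i * (r.choose i : ℂ) * (∏ j ∈ Finset.range i, (y - (j : ℂ))) *
            ∏ j ∈ Finset.range (r + 1 - i), (x - (i : ℂ) - (j : ℂ))
          = (∑ i ∈ Finset.range (r + 1),
              (-1 : ℂ) ^ (i+1) * (r.choose (i+1) : ℂ) * (∏ j ∈ Finset.range (i+1), (y - (j : ℂ))) *
                ∏ j ∈ Finset.range (r + 1 - (i+1)), (x - ((i+1 : ℕ) : ℂ) - (j : ℂ)))
            + (-1 : ℂ) ^ 0 * (r.choose 0 : ℂ) * (∏ j ∈ Finset.range 0, (y - (j : ℂ))) *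
                ∏ j ∈ Finset.range (r + 1 - 0), (x - ((0 : ℕ) : ℂ) - (j : ℂ)) :=
        Finset.sum_range_succ' _ _
      rw [e1, ← estep]
      have e2 : ∑ i ∈ Finset.range (r + 2),
          (-1 : ℂ) ^ i * (r.choose i : ℂ) * (∏ j ∈ Finset.range i, (y - (j : ℂ))) *
            ∏ j ∈ Finset.range (r + 1 - i), (x - (i : ℂ) - (j : ℂ))
          = ∑ i ∈ Finset.range (r + 1),
          (-1 : ℂ) ^ i * (r.choose i : ℂ) * (∏ j ∈ Finset.range i, (y - (j : ℂ))) *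
            ∏ j ∈ Finset.range (r + 1 - i), (x - (i : ℂ) - (j : ℂ)) := by
        rw [Finset.sum_range_succ]
        simp [Nat.choose_succ_self]
      rw [e2]
      have e3 : ∀ i ∈ Finset.range (r + 1),
          (-1 : ℂ) ^ i * (r.choose i : ℂ) * (∏ j ∈ Finset.range i, (y - (j : ℂ))) *
            ∏ j ∈ Finset.range (r + 1 - i), (x - (i : ℂ) - (j : ℂ))
          = (x - (r : ℂ)) * ((-1 : ℂ) ^ i * (r.choose i : ℂ) *
              (∏ j ∈ Finset.range i, (y - (j : ℂ))) *
              ∏ j ∈ Finset.range (r - i), (x - (i : ℂ) - (j : ℂ))) := by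
        intro i hi
        have hir : i ≤ r := Nat.lt_succ_iff.mp (Finset.mem_range.mp hi)
        have hQ : ∏ j ∈ Finset.range (r + 1 - i), (x - (i : ℂ) - (j : ℂ))
            = (∏ j ∈ Finset.range (r - i), (x - (i : ℂ) - (j : ℂ))) * (x - (r : ℂ)) := by
          rw [show r + 1 - i = (r - i) + 1 from by omega, Finset.prod_range_succ]
          congr 1
          rw [Nat.cast_sub hir]
          ring
        rw [hQ]; ring
      rw [Finset.sum_congr rfl e3, ← Finset.mul_sum, ← ih x y]
    rw [Finset.prod_range_succ]
    linear_combination -hS1 - hS2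

/-- **Identity (B.8)/(eqn-identity).**  For natural numbers `r ≤ n` and `x ∈ ℂ`:
`(x−n+r)(x−n+r−1)⋯(x−n+1)
  = Σ_{i=0}^{r} (−1)^i C(r,i) (n−r)(n−r−1)⋯(n−r−i+1) (x−i)(x−i−1)⋯(x−r+1)`. -/
theorem falling_factorial_identity (n r : ℕ) (hrn : r ≤ n) (x : ℂ) :
    (∏ j ∈ Finset.range r, (x - (n : ℂ) + (r : ℂ) - (j : ℂ))) =
      ∑ i ∈ Finset.range (r + 1),
        (-1) ^ i * (r.choose i : ℂ) * ((n - r).descFactorial i : ℂ) *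
          ∏ j ∈ Finset.range (r - i), (x - (i : ℂ) - (j : ℂ)) := by
  have h1 : ∏ j ∈ Finset.range r, (x - (n : ℂ) + (r : ℂ) - (j : ℂ))
      = ∏ j ∈ Finset.range r, (x - ((n : ℂ) - (r : ℂ)) - (j : ℂ)) :=
    Finset.prod_congr rfl (fun j _ => by ring)
  rw [h1, aux_vandermonde r x ((n : ℂ) - (r : ℂ))]
  refine Finset.sum_congr rfl (fun i _ => ?_)
  rw [cast_descFactorial]
  congr 1
  congr 1
  refine Finset.prod_congr rfl (fun j _ => ?_)
  rw [Nat.cast_sub hrn]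
end

section
/- In U(𝔤): there exist nonzero rational numbers C₀, C₁, C₂ such that (F₃₁)_L(a) = C₀·F₁₀, (F₃₁²)_L(b) = C₁·(F₃₁E₁₁ − F₂₁E₀₁), and (F₃₁³)_L(c) = C₂·(F₃₁(H₃₂+1)E₀₁ + F₃₂E₀₁² − F₃₁²E₃₂); moreover (F₃₁²)_L(a) = 0, (F₃₁³)_L(b) = 0, and (F₃₁⁴)_L(c) = 0. (The paper gives C₀ = 1, C₁ = −2!, C₂ = 3!.) -/
/-- The adjoint action `X_L : f ↦ Xf − fX` of `X ∈ L` on `U(L)`. -/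
noncomputable def adU {L : Type*} [LieRing L] [LieAlgebra ℂ L] (x : L)
    (f : UniversalEnvelopingAlgebra ℂ L) : UniversalEnvelopingAlgebra ℂ L :=
  ιU x * f - f * ιU x

/-- A Lie algebra over `ℂ` equipped with Chevalley generators of type `G₂`:
`E₁₀, F₁₀, H₁₀` correspond to the short simple root `α` and `E₀₁, F₀₁, H₀₁` to the long
simple root `β`, subject to the Chevalley relations and the Serre relations, and the
generators generate the Lie algebra.  (By Serre's theorem such a Lie algebra is a quotient of
the simple Lie algebra of type `G₂`.) -/
structure G2Gens (L : Type*) [LieRing L] [LieAlgebra ℂ L] where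
  E10 : L
  E01 : L
  F10 : L
  F01 : L
  H10 : L
  H01 : L
  hH10H01 : ⁅H10, H01⁆ = 0
  hE10F10 : ⁅E10, F10⁆ = H10
  hE01F01 : ⁅E01, F01⁆ = H01
  hE10F01 : ⁅E10, F01⁆ = 0
  hE01F10 : ⁅E01, F10⁆ = 0
  hH10E10 : ⁅H10, E10⁆ = (2 : ℂ) • E10
  hH01E01 : ⁅H01, E01⁆ = (2 : ℂ) • E01
  hH10E01 : ⁅H10, E01⁆ = (-3 : ℂ) • E01
  hH01E10 : ⁅H01, E10⁆ = (-1 : ℂ) • E10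
  hH10F10 : ⁅H10, F10⁆ = (-2 : ℂ) • F10
  hH01F01 : ⁅H01, F01⁆ = (-2 : ℂ) • F01
  hH10F01 : ⁅H10, F01⁆ = (3 : ℂ) • F01
  hH01F10 : ⁅H01, F10⁆ = (1 : ℂ) • F10
  serreE1 : ⁅E10, ⁅E10, ⁅E10, ⁅E10, E01⁆⁆⁆⁆ = 0
  serreE2 : ⁅E01, ⁅E01, E10⁆⁆ = 0
  serreF1 : ⁅F10, ⁅F10, ⁅F10, ⁅F10, F01⁆⁆⁆⁆ = 0
  serreF2 : ⁅F01, ⁅F01, F10⁆⁆ = 0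
  generates : LieSubalgebra.lieSpan ℂ L {E10, E01, F10, F01, H10, H01} = ⊤

namespace G2Gens

variable {L : Type*} [LieRing L] [LieAlgebra ℂ L] (g : G2Gens L)

/-- The root vector `E₁₁ = [E₁₀, E₀₁]`. -/
def E11 : L := ⁅g.E10, g.E01⁆
/-- The root vector `E₂₁ = (1/2)[E₁₁, E₁₀]`. -/
noncomputable def E21 : L := (2 : ℂ)⁻¹ • ⁅g.E11, g.E10⁆
/-- The root vector `E₃₁ = (1/3)[E₂₁, E₁₀]`. -/
noncomputable def E31 : L := (3 : ℂ)⁻¹ • ⁅g.E21, g.E10⁆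
/-- The root vector `E₃₂ = [E₃₁, E₀₁]`. -/
noncomputable def E32 : L := ⁅g.E31, g.E01⁆
/-- The root vector `F₁₁ = [F₀₁, F₁₀]`. -/
def F11 : L := ⁅g.F01, g.F10⁆
/-- The root vector `F₂₁ = (1/2)[F₁₀, F₁₁]`. -/
noncomputable def F21 : L := (2 : ℂ)⁻¹ • ⁅g.F10, g.F11⁆
/-- The root vector `F₃₁ = (1/3)[F₁₀, F₂₁]`. -/
noncomputable def F31 : L := (3 : ℂ)⁻¹ • ⁅g.F10, g.F21⁆
/-- The root vector `F₃₂ = [F₀₁, F₃₁]`. -/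
noncomputable def F32 : L := ⁅g.F01, g.F31⁆
/-- The coroot `H₁₁ = H₁₀ + 3H₀₁`. -/
def H11 : L := g.H10 + (3 : ℂ) • g.H01
/-- The coroot `H₂₁ = 2H₁₀ + 3H₀₁`. -/
def H21 : L := (2 : ℂ) • g.H10 + (3 : ℂ) • g.H01
/-- The coroot `H₃₁ = H₁₀ + H₀₁`. -/
def H31 : L := g.H10 + g.H01
/-- The coroot `H₃₂ = H₁₀ + 2H₀₁`. -/
def H32 : L := g.H10 + (2 : ℂ) • g.H01

/-- The element `a = E₂₁` of `U(𝔤)`. -/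
noncomputable def aU : UniversalEnvelopingAlgebra ℂ L := ιU g.E21
/-- The element `b = E₃₁E₁₁ − E₃₂E₁₀` of `U(𝔤)`. -/
noncomputable def bU : UniversalEnvelopingAlgebra ℂ L :=
  ιU g.E31 * ιU g.E11 - ιU g.E32 * ιU g.E10
/-- The element `c = E₃₁²E₀₁ − E₃₂E₃₁H₀₁ − E₃₂²F₀₁` of `U(𝔤)`. -/
noncomputable def cU : UniversalEnvelopingAlgebra ℂ L :=
  ιU g.E31 * ιU g.E31 * ιU g.E01 - ιU g.E32 * ιU g.E31 * ιU g.H01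
    - ιU g.E32 * ιU g.E32 * ιU g.F01
/-- The element `u = (1/3)a² − b` of `U(𝔤)`. -/
noncomputable def uU : UniversalEnvelopingAlgebra ℂ L :=
  (3 : ℂ)⁻¹ • (g.aU * g.aU) - g.bU
/-- The element `v = (2/9)a³ − ab − 3c` of `U(𝔤)`. -/
noncomputable def vU : UniversalEnvelopingAlgebra ℂ L :=
  ((2 : ℂ) / 9) • (g.aU * g.aU * g.aU) - g.aU * g.bU - (3 : ℂ) • g.cU

/-- `f ≡ h (mod U(𝔤)𝔫₊)`:  `f − h` lies in the left ideal of `U(𝔤)` generated by `E₁₀`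
and `E₀₁`. -/
def EqModN (f h : UniversalEnvelopingAlgebra ℂ L) : Prop :=
  ∃ A B : UniversalEnvelopingAlgebra ℂ L, f - h = A * ιU g.E10 + B * ιU g.E01

end G2Gens

section Auxiliary

variable {L : Type*} [LieRing L] [LieAlgebra ℂ L]

lemma adU_iota (x y : L) : adU x (ιU y) = ιU ⁅x, y⁆ := by
  simp only [adU, ιU, LieHom.map_lie, Ring.lie_def]

lemma adU_mul (x : L) (f h : UniversalEnvelopingAlgebra ℂ L) :
    adU x (f * h) = adU x f * h + f * adU x h := by simp only [adU]; noncomm_ring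

lemma adU_add (x : L) (f h : UniversalEnvelopingAlgebra ℂ L) :
    adU x (f + h) = adU x f + adU x h := by simp only [adU]; noncomm_ring

lemma adU_sub (x : L) (f h : UniversalEnvelopingAlgebra ℂ L) :
    adU x (f - h) = adU x f - adU x h := by simp only [adU]; noncomm_ring

lemma adU_neg (x : L) (f : UniversalEnvelopingAlgebra ℂ L) :
    adU x (-f) = -adU x f := by simp only [adU]; noncomm_ring

lemma adU_smul (x : L) (c : ℂ) (f : UniversalEnvelopingAlgebra ℂ L) :
    adU x (c • f) = c • adU x f := by
  simp only [adU, mul_smul_comm, smul_mul_assoc, smul_sub]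

lemma adU_one (x : L) : adU x 1 = 0 := by simp [adU]

lemma adU_ofNat (x : L) (n : ℕ) [n.AtLeastTwo] :
    adU x (OfNat.ofNat n : UniversalEnvelopingAlgebra ℂ L) = 0 := by
  simp only [adU, sub_eq_zero]
  exact (Commute.ofNat_right (ιU x) n).eq

lemma iota_swap (x y : L) : ιU x * ιU y = ιU y * ιU x + ιU ⁅x, y⁆ := by
  simp only [ιU, LieHom.map_lie, Ring.lie_def]; noncomm_ring

lemma iota_swap' (x y : L) (u : UniversalEnvelopingAlgebra ℂ L) :
    ιU x * (ιU y * u) = ιU y * (ιU x * u) + ιU ⁅x, y⁆ * u := by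
  rw [← mul_assoc, iota_swap, ← mul_assoc]; noncomm_ring

lemma iota_zero : ιU (0 : L) = 0 := by simp [ιU]

lemma iota_neg (x : L) : ιU (-x) = -ιU x := by simp [ιU]

lemma iota_add (x y : L) : ιU (x + y) = ιU x + ιU y := by simp [ιU]

lemma iota_sub (x y : L) : ιU (x - y) = ιU x - ιU y := by simp [ιU]

lemma iota_smul (c : ℂ) (x : L) : ιU (c • x) = c • ιU x := by simp [ιU]

lemma csmul2 (u : UniversalEnvelopingAlgebra ℂ L) : (2 : ℂ) • u = 2 * u := by
  rw [Algebra.smul_def, map_ofNat]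

lemma csmul3 (u : UniversalEnvelopingAlgebra ℂ L) : (3 : ℂ) • u = 3 * u := by
  rw [Algebra.smul_def, map_ofNat]

lemma mulPull2 (u v : UniversalEnvelopingAlgebra ℂ L) : u * (2 * v) = 2 * (u * v) := by
  noncomm_ring

lemma mulPull3 (u v : UniversalEnvelopingAlgebra ℂ L) : u * (3 * v) = 3 * (u * v) := by
  noncomm_ring

lemma csmul6 (u : UniversalEnvelopingAlgebra ℂ L) : (6 : ℂ) • u = 6 * u := by
  rw [Algebra.smul_def, map_ofNat]

end Auxiliary

namespace G2Gens

variable {L : Type*} [LieRing L] [LieAlgebra ℂ L] (g : G2Gens L)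

/-! ### Bracket relations in `L` -/

lemma lie_F01_F10 : ⁅g.F01, g.F10⁆ = g.F11 := rfl

lemma lie_F10_F11' : ⁅g.F10, g.F11⁆ = (2 : ℂ) • g.F21 := by
  rw [F21, smul_smul]; norm_num

lemma lie_F10_F21' : ⁅g.F10, g.F21⁆ = (3 : ℂ) • g.F31 := by
  rw [F31, smul_smul]; norm_num

lemma lie_F01_F31' : ⁅g.F01, g.F31⁆ = g.F32 := rfl

lemma lie_F10_F01 : ⁅g.F10, g.F01⁆ = -g.F11 := by
  rw [← lie_skew g.F10 g.F01, g.lie_F01_F10]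

lemma lie_H10_F11 : ⁅g.H10, g.F11⁆ = g.F11 := by
  rw [F11, leibniz_lie, g.hH10F01, g.hH10F10, smul_lie, lie_smul]
  module

lemma lie_H01_F11 : ⁅g.H01, g.F11⁆ = -g.F11 := by
  rw [F11, leibniz_lie, g.hH01F01, g.hH01F10, smul_lie, lie_smul]
  module

lemma lie_E10_F11 : ⁅g.E10, g.F11⁆ = (-3 : ℂ) • g.F01 := by
  rw [F11, leibniz_lie, g.hE10F01, g.hE10F10, zero_lie, zero_add,
    ← lie_skew g.F01 g.H10, g.hH10F01]
  module

lemma lie_E01_F11 : ⁅g.E01, g.F11⁆ = g.F10 := by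
  rw [F11, leibniz_lie, g.hE01F01, g.hE01F10, lie_zero, add_zero, g.hH01F10]
  module

lemma lie_F01_F11 : ⁅g.F01, g.F11⁆ = 0 := by rw [F11]; exact g.serreF2

lemma lie_H10_F21 : ⁅g.H10, g.F21⁆ = -g.F21 := by
  rw [F21, lie_smul, leibniz_lie, g.hH10F10, g.lie_H10_F11, smul_lie]
  module

lemma lie_H01_F21 : ⁅g.H01, g.F21⁆ = 0 := by
  rw [F21, lie_smul, leibniz_lie, g.hH01F10, g.lie_H01_F11, smul_lie, lie_neg]
  module

lemma lie_E10_F21 : ⁅g.E10, g.F21⁆ = (2 : ℂ) • g.F11 := by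
  rw [F21, lie_smul, leibniz_lie, g.hE10F10, g.lie_H10_F11, g.lie_E10_F11,
    lie_smul, g.lie_F10_F01]
  module

lemma lie_E01_F21 : ⁅g.E01, g.F21⁆ = 0 := by
  rw [F21, lie_smul, leibniz_lie, g.hE01F10, zero_lie, g.lie_E01_F11, lie_self]
  simp

lemma lie_F01_F21 : ⁅g.F01, g.F21⁆ = 0 := by
  rw [F21, lie_smul, leibniz_lie, g.lie_F01_F10, lie_self, g.lie_F01_F11, lie_zero]
  simp

lemma lie_H10_F31 : ⁅g.H10, g.F31⁆ = (-3 : ℂ) • g.F31 := by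
  rw [F31, lie_smul, leibniz_lie, g.hH10F10, g.lie_H10_F21, smul_lie, lie_neg]
  module

lemma lie_H01_F31 : ⁅g.H01, g.F31⁆ = g.F31 := by
  rw [F31, lie_smul, leibniz_lie, g.hH01F10, g.lie_H01_F21, lie_zero, smul_lie]
  module

lemma lie_E10_F31 : ⁅g.E10, g.F31⁆ = g.F21 := by
  rw [F31, lie_smul, leibniz_lie, g.hE10F10, g.lie_H10_F21, g.lie_E10_F21,
    lie_smul, g.lie_F10_F11']
  module

lemma lie_E01_F31 : ⁅g.E01, g.F31⁆ = 0 := by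
  rw [F31, lie_smul, leibniz_lie, g.hE01F10, zero_lie, g.lie_E01_F21, lie_zero]
  simp

lemma lie_F10_F31 : ⁅g.F10, g.F31⁆ = 0 := by
  have h4 : ⁅g.F10, ⁅g.F10, ⁅g.F10, ⁅g.F01, g.F10⁆⁆⁆⁆ = 0 := by
    rw [← lie_skew g.F01 g.F10]
    simp only [lie_neg]
    rw [g.serreF1, neg_zero]
  rw [F31, F21, F11]
  simp only [lie_smul]
  rw [h4]
  simp

lemma lie_F11_F10 : ⁅g.F11, g.F10⁆ = (-2 : ℂ) • g.F21 := by
  rw [← lie_skew g.F11 g.F10, g.lie_F10_F11']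
  module

lemma lie_F11_F21 : ⁅g.F11, g.F21⁆ = (3 : ℂ) • g.F32 := by
  rw [F11, lie_lie, g.lie_F10_F21', g.lie_F01_F21, lie_zero, sub_zero,
    lie_smul, g.lie_F01_F31']

lemma lie_F11_F31 : ⁅g.F11, g.F31⁆ = 0 := by
  have hx : ⁅g.F11, g.F31⁆ = ⁅g.F10, g.F32⁆ := by
    conv_lhs => rw [F31]
    rw [lie_smul, leibniz_lie, g.lie_F11_F10, g.lie_F11_F21, smul_lie, lie_self,
      lie_smul]
    module
  have hy : ⁅g.F10, g.F32⁆ = -⁅g.F11, g.F31⁆ := by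
    conv_lhs => rw [F32]
    rw [leibniz_lie, g.lie_F10_F01, g.lie_F10_F31, lie_zero, add_zero, neg_lie]
  have h2 : (2 : ℂ) • ⁅g.F11, g.F31⁆ = 0 := by
    rw [two_smul]
    nth_rewrite 1 [hx]
    rw [hy, neg_add_cancel]
  rcases smul_eq_zero.mp h2 with h | h
  · norm_num at h
  · exact h

lemma lie_F10_F32 : ⁅g.F10, g.F32⁆ = 0 := by
  have hy : ⁅g.F10, g.F32⁆ = -⁅g.F11, g.F31⁆ := by
    conv_lhs => rw [F32]
    rw [leibniz_lie, g.lie_F10_F01, g.lie_F10_F31, lie_zero, add_zero, neg_lie]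
  rw [hy, g.lie_F11_F31, neg_zero]

lemma lie_F31_F10 : ⁅g.F31, g.F10⁆ = 0 := by
  rw [← lie_skew g.F31 g.F10, g.lie_F10_F31, neg_zero]

lemma lie_F31_F11 : ⁅g.F31, g.F11⁆ = 0 := by
  rw [← lie_skew g.F31 g.F11, g.lie_F11_F31, neg_zero]

lemma lie_F31_F21 : ⁅g.F31, g.F21⁆ = 0 := by
  rw [F21, lie_smul, leibniz_lie, g.lie_F31_F10, g.lie_F31_F11, zero_lie,
    lie_zero, add_zero]
  simp

lemma lie_F21_F01 : ⁅g.F21, g.F01⁆ = 0 := by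
  rw [← lie_skew g.F21 g.F01, g.lie_F01_F21, neg_zero]

lemma lie_F21_F31 : ⁅g.F21, g.F31⁆ = 0 := by
  rw [← lie_skew g.F21 g.F31, g.lie_F31_F21, neg_zero]

lemma lie_F21_F32 : ⁅g.F21, g.F32⁆ = 0 := by
  rw [F32, leibniz_lie, g.lie_F21_F01, zero_lie, g.lie_F21_F31, lie_zero,
    add_zero]

lemma lie_F31_F32 : ⁅g.F31, g.F32⁆ = 0 := by
  conv_lhs => rw [F31]
  rw [smul_lie, lie_lie, g.lie_F21_F32, lie_zero, g.lie_F10_F32, lie_zero]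
  simp

/-! ### E-side brackets -/

lemma lie_E10_E01' : ⁅g.E10, g.E01⁆ = g.E11 := rfl

lemma lie_H10_E11 : ⁅g.H10, g.E11⁆ = -g.E11 := by
  rw [E11, leibniz_lie, g.hH10E10, g.hH10E01, smul_lie, lie_smul]
  module

lemma lie_E11_F01 : ⁅g.E11, g.F01⁆ = g.E10 := by
  rw [E11, lie_lie, g.hE01F01, g.hE10F01, lie_zero, sub_zero,
    ← lie_skew g.E10 g.H01, g.hH01E10]
  module

lemma lie_E11_F10 : ⁅g.E11, g.F10⁆ = (-3 : ℂ) • g.E01 := by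
  rw [E11, lie_lie, g.hE01F10, g.hE10F10, lie_zero, zero_sub,
    ← lie_skew g.E01 g.H10, g.hH10E01]
  module

lemma lie_E11_F11 : ⁅g.E11, g.F11⁆ = g.H10 + (3 : ℂ) • g.H01 := by
  rw [F11, leibniz_lie, g.lie_E11_F01, g.hE10F10, g.lie_E11_F10, lie_smul,
    ← lie_skew g.F01 g.E01, g.hE01F01]
  module

lemma lie_E21_F01 : ⁅g.E21, g.F01⁆ = 0 := by
  rw [E21, smul_lie, lie_lie, g.hE10F01, lie_zero, g.lie_E11_F01, lie_self,
    zero_sub, neg_zero, smul_zero]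

lemma lie_E21_F10 : ⁅g.E21, g.F10⁆ = (2 : ℂ) • g.E11 := by
  rw [E21, smul_lie, lie_lie, g.hE10F10, g.lie_E11_F10, lie_smul,
    ← lie_skew g.E11 g.H10, g.lie_H10_E11, g.lie_E10_E01']
  module

lemma lie_E21_F11 : ⁅g.E21, g.F11⁆ = (-2 : ℂ) • g.E10 := by
  rw [F11, leibniz_lie, g.lie_E21_F01, zero_lie, zero_add, g.lie_E21_F10,
    lie_smul, ← lie_skew g.F01 g.E11, g.lie_E11_F01]
  module

lemma lie_E11_F21 : ⁅g.E11, g.F21⁆ = (-2 : ℂ) • g.F10 := by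
  rw [F21, lie_smul, leibniz_lie, g.lie_E11_F10, g.lie_E11_F11, smul_lie,
    g.lie_E01_F11, lie_add, lie_smul, ← lie_skew g.F10 g.H10, g.hH10F10,
    ← lie_skew g.F10 g.H01, g.hH01F10]
  module

lemma lie_E21_F21 : ⁅g.E21, g.F21⁆ = (2 : ℂ) • g.H10 + (3 : ℂ) • g.H01 := by
  rw [F21, lie_smul, leibniz_lie, g.lie_E21_F10, g.lie_E21_F11, smul_lie,
    lie_smul, g.lie_E11_F11, ← lie_skew g.F10 g.E10, g.hE10F10]
  module

/-! ### Brackets of `F31` with the `E`-side -/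

lemma lie_F31_E10 : ⁅g.F31, g.E10⁆ = -g.F21 := by
  rw [← lie_skew g.F31 g.E10, g.lie_E10_F31]

lemma lie_F31_E01 : ⁅g.F31, g.E01⁆ = 0 := by
  rw [← lie_skew g.F31 g.E01, g.lie_E01_F31, neg_zero]

lemma lie_F31_E11 : ⁅g.F31, g.E11⁆ = 0 := by
  rw [E11, leibniz_lie, g.lie_F31_E10, g.lie_F31_E01, lie_zero, add_zero,
    neg_lie, ← lie_skew g.F21 g.E01, g.lie_E01_F21]
  simp

lemma lie_F31_E21 : ⁅g.F31, g.E21⁆ = g.F10 := by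
  rw [E21, lie_smul, leibniz_lie, g.lie_F31_E11, zero_lie, zero_add,
    g.lie_F31_E10, lie_neg, g.lie_E11_F21]
  module

lemma lie_F31_E31 : ⁅g.F31, g.E31⁆ = -g.H10 - g.H01 := by
  rw [E31, lie_smul, leibniz_lie, g.lie_F31_E21, g.lie_F31_E10, lie_neg,
    g.lie_E21_F21, ← lie_skew g.F10 g.E10, g.hE10F10]
  module

lemma lie_F31_E32 : ⁅g.F31, g.E32⁆ = g.E01 := by
  rw [E32, leibniz_lie, g.lie_F31_E31, g.lie_F31_E01, lie_zero, add_zero,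
    sub_lie, neg_lie, g.hH10E01, g.hH01E01]
  module

lemma lie_E01_F32 : ⁅g.E01, g.F32⁆ = g.F31 := by
  rw [F32, leibniz_lie, g.hE01F01, g.lie_E01_F31, lie_zero, add_zero,
    g.lie_H01_F31]

lemma lie_E01_H10 : ⁅g.E01, g.H10⁆ = (3 : ℂ) • g.E01 := by
  rw [← lie_skew g.E01 g.H10, g.hH10E01]
  module

lemma lie_E01_H01 : ⁅g.E01, g.H01⁆ = (-2 : ℂ) • g.E01 := by
  rw [← lie_skew g.E01 g.H01, g.hH01E01]
  module

lemma lie_F31_H10 : ⁅g.F31, g.H10⁆ = (3 : ℂ) • g.F31 := by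
  rw [← lie_skew g.F31 g.H10, g.lie_H10_F31]
  module

lemma lie_F31_H01 : ⁅g.F31, g.H01⁆ = -g.F31 := by
  rw [← lie_skew g.F31 g.H01, g.lie_H01_F31]

lemma lie_F31_F01 : ⁅g.F31, g.F01⁆ = -g.F32 := by
  rw [← lie_skew g.F31 g.F01, g.lie_F01_F31']

lemma lie_F31_H32 : ⁅g.F31, g.H32⁆ = g.F31 := by
  rw [H32, lie_add, lie_smul, g.lie_F31_H10, g.lie_F31_H01]
  module

lemma lie_E32_F31 : ⁅g.E32, g.F31⁆ = -g.E01 := by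
  rw [← lie_skew g.E32 g.F31, g.lie_F31_E32]

end G2Gens

namespace G2Gens

variable {L : Type*} [LieRing L] [LieAlgebra ℂ L] (g : G2Gens L)

/-! ### The derivation `D = adU F31` on generators -/

lemma DF10 : adU g.F31 (ιU g.F10) = 0 := by
  rw [adU_iota, g.lie_F31_F10, iota_zero]

lemma DF01 : adU g.F31 (ιU g.F01) = -(ιU g.F32) := by
  rw [adU_iota, g.lie_F31_F01, iota_neg]

lemma DF21 : adU g.F31 (ιU g.F21) = 0 := by
  rw [adU_iota, g.lie_F31_F21, iota_zero]

lemma DF31 : adU g.F31 (ιU g.F31) = 0 := by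
  rw [adU_iota, lie_self, iota_zero]

lemma DF32 : adU g.F31 (ιU g.F32) = 0 := by
  rw [adU_iota, g.lie_F31_F32, iota_zero]

lemma DH10 : adU g.F31 (ιU g.H10) = 3 * ιU g.F31 := by
  rw [adU_iota, g.lie_F31_H10, iota_smul, csmul3]

lemma DH01 : adU g.F31 (ιU g.H01) = -(ιU g.F31) := by
  rw [adU_iota, g.lie_F31_H01, iota_neg]

lemma DH32 : adU g.F31 (ιU g.H32) = ιU g.F31 := by
  rw [adU_iota, g.lie_F31_H32]

lemma DE10 : adU g.F31 (ιU g.E10) = -(ιU g.F21) := by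
  rw [adU_iota, g.lie_F31_E10, iota_neg]

lemma DE01 : adU g.F31 (ιU g.E01) = 0 := by
  rw [adU_iota, g.lie_F31_E01, iota_zero]

lemma DE11 : adU g.F31 (ιU g.E11) = 0 := by
  rw [adU_iota, g.lie_F31_E11, iota_zero]

lemma DE21 : adU g.F31 (ιU g.E21) = ιU g.F10 := by
  rw [adU_iota, g.lie_F31_E21]

lemma DE31 : adU g.F31 (ιU g.E31) = -(ιU g.H10) - ιU g.H01 := by
  rw [adU_iota, g.lie_F31_E31, iota_sub, iota_neg]

lemma DE32 : adU g.F31 (ιU g.E32) = ιU g.E01 := by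
  rw [adU_iota, g.lie_F31_E32]

/-! ### Reordering (swap) lemmas in `U(𝔤)` -/

lemma sw1 : ιU g.E01 * ιU g.F32 = ιU g.F32 * ιU g.E01 + ιU g.F31 := by
  rw [iota_swap, g.lie_E01_F32]

lemma sw1' (u : UniversalEnvelopingAlgebra ℂ L) :
    ιU g.E01 * (ιU g.F32 * u) = ιU g.F32 * (ιU g.E01 * u) + ιU g.F31 * u := by
  rw [iota_swap', g.lie_E01_F32]

lemma sw2 : ιU g.E01 * ιU g.F31 = ιU g.F31 * ιU g.E01 := by
  rw [iota_swap, g.lie_E01_F31, iota_zero, add_zero]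

lemma sw2' (u : UniversalEnvelopingAlgebra ℂ L) :
    ιU g.E01 * (ιU g.F31 * u) = ιU g.F31 * (ιU g.E01 * u) := by
  rw [iota_swap', g.lie_E01_F31, iota_zero, zero_mul, add_zero]

lemma sw3 : ιU g.H01 * ιU g.F31 = ιU g.F31 * ιU g.H01 + ιU g.F31 := by
  rw [iota_swap, g.lie_H01_F31]

lemma sw3' (u : UniversalEnvelopingAlgebra ℂ L) :
    ιU g.H01 * (ιU g.F31 * u) = ιU g.F31 * (ιU g.H01 * u) + ιU g.F31 * u := by
  rw [iota_swap', g.lie_H01_F31]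

lemma sw4 : ιU g.H10 * ιU g.F31 = ιU g.F31 * ιU g.H10 - 3 * (ιU g.F31) := by
  rw [iota_swap, g.lie_H10_F31, iota_smul, neg_smul, csmul3]
  noncomm_ring

lemma sw4' (u : UniversalEnvelopingAlgebra ℂ L) :
    ιU g.H10 * (ιU g.F31 * u) = ιU g.F31 * (ιU g.H10 * u) - 3 * (ιU g.F31 * u) := by
  rw [iota_swap', g.lie_H10_F31, iota_smul, neg_smul, csmul3]
  noncomm_ring

lemma sw5 : ιU g.E32 * ιU g.F31 = ιU g.F31 * ιU g.E32 - ιU g.E01 := by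
  rw [iota_swap, g.lie_E32_F31, iota_neg]
  noncomm_ring

lemma sw5' (u : UniversalEnvelopingAlgebra ℂ L) :
    ιU g.E32 * (ιU g.F31 * u) = ιU g.F31 * (ιU g.E32 * u) - ιU g.E01 * u := by
  rw [iota_swap', g.lie_E32_F31, iota_neg]
  noncomm_ring

lemma sw6 : ιU g.E01 * ιU g.H10 = ιU g.H10 * ιU g.E01 + 3 * (ιU g.E01) := by
  rw [iota_swap, g.lie_E01_H10, iota_smul, csmul3]

lemma sw6' (u : UniversalEnvelopingAlgebra ℂ L) :
    ιU g.E01 * (ιU g.H10 * u) = ιU g.H10 * (ιU g.E01 * u) + 3 * (ιU g.E01 * u) := by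
  rw [iota_swap', g.lie_E01_H10, iota_smul, csmul3]
  noncomm_ring

lemma sw7 : ιU g.E01 * ιU g.H01 = ιU g.H01 * ιU g.E01 - 2 * (ιU g.E01) := by
  rw [iota_swap, g.lie_E01_H01, iota_smul, neg_smul, csmul2]
  noncomm_ring

lemma sw7' (u : UniversalEnvelopingAlgebra ℂ L) :
    ιU g.E01 * (ιU g.H01 * u) = ιU g.H01 * (ιU g.E01 * u) - 2 * (ιU g.E01 * u) := by
  rw [iota_swap', g.lie_E01_H01, iota_smul, neg_smul, csmul2]
  noncomm_ring

lemma sw8 : ιU g.E01 * ιU g.F21 = ιU g.F21 * ιU g.E01 := by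
  have h : ⁅g.E01, g.F21⁆ = 0 := g.lie_E01_F21
  rw [iota_swap, h, iota_zero, add_zero]

/-! ### The chain of computations -/

lemma step_a : adU g.F31 g.aU = ιU g.F10 := by
  rw [aU, g.DE21]

lemma step_b1 : adU g.F31 g.bU =
    -(ιU g.E01 * ιU g.E10) + ιU g.E32 * ιU g.F21 - ιU g.H01 * ιU g.E11
      - ιU g.H10 * ιU g.E11 := by
  rw [bU]
  simp only [adU_sub, adU_mul, g.DE31, g.DE11, g.DE32, g.DE10]
  noncomm_ring

lemma step_b2 : adU g.F31
    (-(ιU g.E01 * ιU g.E10) + ιU g.E32 * ιU g.F21 - ιU g.H01 * ιU g.E11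
      - ιU g.H10 * ιU g.E11) =
    2 * (ιU g.E01 * ιU g.F21) - 2 * (ιU g.F31 * ιU g.E11) := by
  simp only [adU_add, adU_sub, adU_neg, adU_mul, g.DE01, g.DE10, g.DE32, g.DF21,
    g.DH01, g.DH10, g.DE11]
  noncomm_ring

lemma match_b : 2 * (ιU g.E01 * ιU g.F21) - 2 * (ιU g.F31 * ιU g.E11) =
    (-2 : ℂ) • (ιU g.F31 * ιU g.E11 - ιU g.F21 * ιU g.E01) := by
  rw [neg_smul, csmul2, g.sw8]
  noncomm_ring

lemma step_c1 : adU g.F31 g.cU =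
    -(ιU g.E01 * ιU g.E31 * ιU g.H01) - ιU g.E01 * ιU g.E32 * ιU g.F01
      - ιU g.E31 * ιU g.H01 * ιU g.E01 - ιU g.E31 * ιU g.H10 * ιU g.E01
      - ιU g.E32 * ιU g.E01 * ιU g.F01 + ιU g.E32 * ιU g.E31 * ιU g.F31
      + ιU g.E32 * ιU g.E32 * ιU g.F32 + ιU g.E32 * ιU g.H01 * ιU g.H01
      + ιU g.E32 * ιU g.H10 * ιU g.H01 - ιU g.H01 * ιU g.E31 * ιU g.E01
      - ιU g.H10 * ιU g.E31 * ιU g.E01 := by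
  rw [cU]
  simp only [adU_sub, adU_mul, g.DE31, g.DE01, g.DE32, g.DH01, g.DF01]
  noncomm_ring

lemma step_c2 : adU g.F31
    (-(ιU g.E01 * ιU g.E31 * ιU g.H01) - ιU g.E01 * ιU g.E32 * ιU g.F01
      - ιU g.E31 * ιU g.H01 * ιU g.E01 - ιU g.E31 * ιU g.H10 * ιU g.E01
      - ιU g.E32 * ιU g.E01 * ιU g.F01 + ιU g.E32 * ιU g.E31 * ιU g.F31
      + ιU g.E32 * ιU g.E32 * ιU g.F32 + ιU g.E32 * ιU g.H01 * ιU g.H01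
      + ιU g.E32 * ιU g.H10 * ιU g.H01 - ιU g.H01 * ιU g.E31 * ιU g.E01
      - ιU g.H10 * ιU g.E31 * ιU g.E01) =
    -((2 : ℂ) • (ιU g.E01 * ιU g.E01 * ιU g.F01)) + (2 : ℂ) • (ιU g.E01 * ιU g.E31 * ιU g.F31)
      + (2 : ℂ) • (ιU g.E01 * ιU g.E32 * ιU g.F32) + (2 : ℂ) • (ιU g.E01 * ιU g.H01 * ιU g.H01)
      + (2 : ℂ) • (ιU g.E01 * ιU g.H10 * ιU g.H01) - (2 : ℂ) • (ιU g.E31 * ιU g.F31 * ιU g.E01)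
      + (2 : ℂ) • (ιU g.E32 * ιU g.E01 * ιU g.F32) + (2 : ℂ) • (ιU g.E32 * ιU g.F31 * ιU g.H01)
      - (2 : ℂ) • (ιU g.E32 * ιU g.H01 * ιU g.F31) - (2 : ℂ) • (ιU g.E32 * ιU g.H10 * ιU g.F31)
      - (2 : ℂ) • (ιU g.F31 * ιU g.E31 * ιU g.E01) + (2 : ℂ) • (ιU g.H01 * ιU g.H01 * ιU g.E01)
      + (2 : ℂ) • (ιU g.H01 * ιU g.H10 * ιU g.E01) + (2 : ℂ) • (ιU g.H10 * ιU g.H01 * ιU g.E01)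
      + (2 : ℂ) • (ιU g.H10 * ιU g.H10 * ιU g.E01) := by
  simp only [adU_add, adU_sub, adU_neg, adU_mul, g.DE31, g.DE01, g.DE32, g.DH01,
    g.DH10, g.DF01, g.DF31, g.DF32]
  simp only [csmul2]
  noncomm_ring

lemma step_c3 : adU g.F31
    (-((2 : ℂ) • (ιU g.E01 * ιU g.E01 * ιU g.F01)) + (2 : ℂ) • (ιU g.E01 * ιU g.E31 * ιU g.F31)
      + (2 : ℂ) • (ιU g.E01 * ιU g.E32 * ιU g.F32) + (2 : ℂ) • (ιU g.E01 * ιU g.H01 * ιU g.H01)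
      + (2 : ℂ) • (ιU g.E01 * ιU g.H10 * ιU g.H01) - (2 : ℂ) • (ιU g.E31 * ιU g.F31 * ιU g.E01)
      + (2 : ℂ) • (ιU g.E32 * ιU g.E01 * ιU g.F32) + (2 : ℂ) • (ιU g.E32 * ιU g.F31 * ιU g.H01)
      - (2 : ℂ) • (ιU g.E32 * ιU g.H01 * ιU g.F31) - (2 : ℂ) • (ιU g.E32 * ιU g.H10 * ιU g.F31)
      - (2 : ℂ) • (ιU g.F31 * ιU g.E31 * ιU g.E01) + (2 : ℂ) • (ιU g.H01 * ιU g.H01 * ιU g.E01)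
      + (2 : ℂ) • (ιU g.H01 * ιU g.H10 * ιU g.E01) + (2 : ℂ) • (ιU g.H10 * ιU g.H01 * ιU g.E01)
      + (2 : ℂ) • (ιU g.H10 * ιU g.H10 * ιU g.E01)) =
    6 * (ιU g.E01 * ιU g.E01 * ιU g.F32) + 6 * (ιU g.E01 * ιU g.F31 * ιU g.H01)
      - 6 * (ιU g.E01 * ιU g.H01 * ιU g.F31) - 6 * (ιU g.E01 * ιU g.H10 * ιU g.F31)
      - 6 * (ιU g.E32 * ιU g.F31 * ιU g.F31) + 6 * (ιU g.F31 * ιU g.H01 * ιU g.E01)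
      + 6 * (ιU g.F31 * ιU g.H10 * ιU g.E01) + 6 * (ιU g.H01 * ιU g.F31 * ιU g.E01)
      + 6 * (ιU g.H10 * ιU g.F31 * ιU g.E01) := by
  simp only [adU_add, adU_sub, adU_neg, adU_smul, adU_mul, g.DE31, g.DE01, g.DE32,
    g.DH01, g.DH10, g.DF01, g.DF31, g.DF32, g.DE11]
  simp only [smul_add, smul_sub, smul_neg, csmul2]
  noncomm_ring

lemma match_c :
    6 * (ιU g.E01 * ιU g.E01 * ιU g.F32) + 6 * (ιU g.E01 * ιU g.F31 * ιU g.H01)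
      - 6 * (ιU g.E01 * ιU g.H01 * ιU g.F31) - 6 * (ιU g.E01 * ιU g.H10 * ιU g.F31)
      - 6 * (ιU g.E32 * ιU g.F31 * ιU g.F31) + 6 * (ιU g.F31 * ιU g.H01 * ιU g.E01)
      + 6 * (ιU g.F31 * ιU g.H10 * ιU g.E01) + 6 * (ιU g.H01 * ιU g.F31 * ιU g.E01)
      + 6 * (ιU g.H10 * ιU g.F31 * ιU g.E01) =
    (6 : ℂ) • (ιU g.F31 * (ιU g.H32 + 1) * ιU g.E01 + ιU g.F32 * (ιU g.E01 * ιU g.E01)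
      - ιU g.F31 * ιU g.F31 * ιU g.E32) := by
  rw [csmul6]
  simp only [H32, iota_add, iota_smul, csmul2]
  simp only [mul_add, add_mul, mul_sub, sub_mul, mul_assoc, mul_one, one_mul]
  simp only [g.sw1', g.sw2', g.sw3', g.sw4', g.sw5', g.sw6', g.sw7', g.sw1, g.sw2,
    g.sw3, g.sw4, g.sw5, g.sw6, g.sw7, mulPull2, mulPull3, mul_add, add_mul, mul_sub,
    sub_mul, mul_assoc]
  noncomm_ring

lemma target_c_zero : adU g.F31 (ιU g.F31 * (ιU g.H32 + 1) * ιU g.E01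
    + ιU g.F32 * (ιU g.E01 * ιU g.E01) - ιU g.F31 * ιU g.F31 * ιU g.E32) = 0 := by
  simp only [adU_add, adU_sub, adU_mul, adU_one, g.DF31, g.DF32, g.DH32, g.DE01,
    g.DE32]
  noncomm_ring

lemma target_b_zero : adU g.F31 (ιU g.F31 * ιU g.E11 - ιU g.F21 * ιU g.E01) = 0 := by
  simp only [adU_sub, adU_mul, g.DF31, g.DF21, g.DE11, g.DE01]
  noncomm_ring

end G2Gens

/-- **Lemma A.4, second family (lem-firststep).**  Identities in `U(𝔤)` for the adjoint action
of powers of `F₃₁` on `a`, `b`, `c`. -/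
theorem G2Gens.adF31_identities
    {L : Type*} [LieRing L] [LieAlgebra ℂ L] (g : G2Gens L) :
    (∃ C₀ C₁ C₂ : ℚ, C₀ ≠ 0 ∧ C₁ ≠ 0 ∧ C₂ ≠ 0 ∧
      adU g.F31 g.aU = (C₀ : ℂ) • ιU g.F10 ∧
      (adU g.F31)^[2] g.bU = (C₁ : ℂ) • (ιU g.F31 * ιU g.E11 - ιU g.F21 * ιU g.E01) ∧
      (adU g.F31)^[3] g.cU =
        (C₂ : ℂ) • (ιU g.F31 * (ιU g.H32 + 1) * ιU g.E01 + ιU g.F32 * (ιU g.E01 * ιU g.E01)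
          - ιU g.F31 * ιU g.F31 * ιU g.E32)) ∧
    (adU g.F31)^[2] g.aU = 0 ∧
    (adU g.F31)^[3] g.bU = 0 ∧
    (adU g.F31)^[4] g.cU = 0 := by
  refine ⟨⟨1, -2, 6, by norm_num, by norm_num, by norm_num, ?_, ?_, ?_⟩, ?_, ?_, ?_⟩
  · rw [g.step_a]
    norm_num
  · rw [show (adU g.F31)^[2] g.bU = adU g.F31 (adU g.F31 g.bU) from rfl,
      g.step_b1, g.step_b2, g.match_b]
    norm_num
  · rw [show (adU g.F31)^[3] g.cU = adU g.F31 (adU g.F31 (adU g.F31 g.cU)) from rfl,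
      g.step_c1, g.step_c2, g.step_c3, g.match_c]
    norm_num
  · rw [show (adU g.F31)^[2] g.aU = adU g.F31 (adU g.F31 g.aU) from rfl,
      g.step_a, g.DF10]
  · rw [show (adU g.F31)^[3] g.bU = adU g.F31 (adU g.F31 (adU g.F31 g.bU)) from rfl,
      g.step_b1, g.step_b2, g.match_b, adU_smul, g.target_b_zero, smul_zero]
  · rw [show (adU g.F31)^[4] g.cU
        = adU g.F31 (adU g.F31 (adU g.F31 (adU g.F31 g.cU))) from rfl,
      g.step_c1, g.step_c2, g.step_c3, g.match_c, adU_smul, g.target_c_zero, smul_zero]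
end

section
/- The set of pairs (x, y) ∈ ℂ × ℂ satisfying the three polynomial equations x(x−1) = 0, (1/3)(x+3y)(x+3y−1) + 3y = 0, and (2x+3y)(2x+3y+2) = 0 is exactly { (0, 0), (0, −2/3), (1, −4/3) }. -/
/-- **Proposition 3.6(1).**  The common zeros in `ℂ²` of the polynomials
`x(x−1)`, `(1/3)(x+3y)(x+3y−1)+3y` and `(2x+3y)(2x+3y+2)` are exactly
`(0,0)`, `(0,−2/3)` and `(1,−4/3)`. -/
theorem common_zeros_level_minus_five_thirds :
    {p : ℂ × ℂ |
        p.1 * (p.1 - 1) = 0 ∧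
        (1 / 3 : ℂ) * (p.1 + 3 * p.2) * (p.1 + 3 * p.2 - 1) + 3 * p.2 = 0 ∧
        (2 * p.1 + 3 * p.2) * (2 * p.1 + 3 * p.2 + 2) = 0} =
      {((0 : ℂ), (0 : ℂ)), (0, -2 / 3), (1, -4 / 3)} := by
  ext ⟨x, y⟩
  simp only [Set.mem_setOf_eq, Set.mem_insert_iff, Set.mem_singleton_iff, Prod.mk.injEq]
  constructor
  · rintro ⟨h1, h2, h3⟩
    have hx : x = 0 ∨ x = 1 := by
      rcases mul_eq_zero.1 h1 with h | h
      · exact Or.inl h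
      · exact Or.inr (by linear_combination h)
    have hy : 2 * x + 3 * y = 0 ∨ 2 * x + 3 * y = -2 := by
      rcases mul_eq_zero.1 h3 with h | h
      · exact Or.inl h
      · exact Or.inr (by linear_combination h)
    rcases hx with hx | hx <;> rcases hy with hy | hy <;> subst hx
    · left; constructor; rfl; linear_combination hy / 3
    · right; left; constructor; rfl; linear_combination hy / 3
    · exfalso
      have hy' : y = -2 / 3 := by linear_combination hy / 3
      subst hy'; norm_num at h2
    · right; right; constructor; rfl; linear_combination hy / 3
  · rintro (⟨hx, hy⟩ | ⟨hx, hy⟩ | ⟨hx, hy⟩) <;> subst hx <;> subst hy <;> norm_num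
end

section
/- The set of pairs (x, y) ∈ ℂ × ℂ satisfying the three polynomial equations x(x−1)(x−2) = 0, (2/9)h₁₁(h₁₁−1)(h₁₁−2) + 6y·h₃₂ = 0, and (2/9)h₂₁(h₂₁−1)(h₂₁−2) + h₂₁(h₂₁−2) + 3y(y+2) = 0, where h₁₁ = x+3y, h₂₁ = 2x+3y, h₃₂ = x+2y, is exactly { (0, 0), (0, −2/3), (0, −1/3), (1, 0), (1, −4/3), (2, −5/3) }. -/
/-- **Proposition 3.6(2).**  With `h₁₁ = x+3y`, `h₂₁ = 2x+3y`, `h₃₂ = x+2y`, the common zeros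
in `ℂ²` of `x(x−1)(x−2)`, `(2/9)h₁₁(h₁₁−1)(h₁₁−2)+6y·h₃₂` and
`(2/9)h₂₁(h₂₁−1)(h₂₁−2)+h₂₁(h₂₁−2)+3y(y+2)` are exactly
`(0,0), (0,−2/3), (0,−1/3), (1,0), (1,−4/3), (2,−5/3)`. -/
theorem common_zeros_level_minus_four_thirds :
    {p : ℂ × ℂ |
        p.1 * (p.1 - 1) * (p.1 - 2) = 0 ∧
        (2 / 9 : ℂ) * (p.1 + 3 * p.2) * (p.1 + 3 * p.2 - 1) * (p.1 + 3 * p.2 - 2)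
            + 6 * p.2 * (p.1 + 2 * p.2) = 0 ∧
        (2 / 9 : ℂ) * (2 * p.1 + 3 * p.2) * (2 * p.1 + 3 * p.2 - 1) * (2 * p.1 + 3 * p.2 - 2)
            + (2 * p.1 + 3 * p.2) * (2 * p.1 + 3 * p.2 - 2)
            + 3 * p.2 * (p.2 + 2) = 0} =
      {((0 : ℂ), (0 : ℂ)), (0, -2 / 3), (0, -1 / 3), (1, 0), (1, -4 / 3), (2, -5 / 3)} := by
  ext ⟨x, y⟩
  simp only [Set.mem_setOf_eq, Set.mem_insert_iff, Set.mem_singleton_iff, Prod.mk.injEq]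
  constructor
  · rintro ⟨h1, h2, h3⟩
    rcases mul_eq_zero.1 h1 with h | hx2
    · rcases mul_eq_zero.1 h with hx0 | hx1
      · -- x = 0
        subst hx0
        have hy : 6 * y * (y + 1/3) * (y + 2/3) = 0 := by linear_combination h2
        rcases mul_eq_zero.1 hy with h' | hc
        · rcases mul_eq_zero.1 h' with h'' | hb
          · have : y = 0 := by
              simpa using h''
            exact Or.inl ⟨rfl, this⟩
          · exact Or.inr (Or.inr (Or.inl ⟨rfl, by linear_combination hb⟩))
        · exact Or.inr (Or.inl ⟨rfl, by linear_combination hc⟩)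
      · -- x = 1
        have hx : x = 1 := by linear_combination hx1
        subst hx
        have hy : 6 * y * (y + 2/3) * (y + 4/3) = 0 := by linear_combination h2
        rcases mul_eq_zero.1 hy with h' | hc
        · rcases mul_eq_zero.1 h' with h'' | hb
          · have : y = 0 := by
              simpa using h''
            exact Or.inr (Or.inr (Or.inr (Or.inl ⟨rfl, this⟩)))
          · -- y = -2/3 contradicts h3
            have hy' : y = -2/3 := by linear_combination hb
            subst hy'
            norm_num at h3
        · exact Or.inr (Or.inr (Or.inr (Or.inr (Or.inl ⟨rfl, by linear_combination hc⟩))))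
      -- x = 2
    · have hx : x = 2 := by linear_combination hx2
      subst hx
      have hy : 6 * y * (y + 4/3) * (y + 5/3) = 0 := by linear_combination h2
      rcases mul_eq_zero.1 hy with h' | hc
      · rcases mul_eq_zero.1 h' with h'' | hb
        · have hy' : y = 0 := by
            simpa using h''
          subst hy'
          norm_num at h3
        · have hy' : y = -4/3 := by linear_combination hb
          subst hy'
          norm_num at h3
      · exact Or.inr (Or.inr (Or.inr (Or.inr (Or.inr ⟨rfl, by linear_combination hc⟩))))
  · rintro (⟨hx, hy⟩ | ⟨hx, hy⟩ | ⟨hx, hy⟩ | ⟨hx, hy⟩ | ⟨hx, hy⟩ | ⟨hx, hy⟩) <;>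
      subst hx <;> subst hy <;> norm_num
end

section
/- The set of pairs (x, y) ∈ ℂ × ℂ satisfying the three polynomial equations p₁ = 0, p₂ = 0, q = 0, where (writing h₂₁ = 2x+3y, h₁₁ = x+3y, h₃₁ = x+y): q = (2/27)h₂₁(h₂₁−1)(h₂₁−2)(h₂₁−3)(h₂₁−4) + (5/9)h₂₁(h₂₁−2)(h₂₁−3)(h₂₁−4) + (h₂₁−3)(h₂₁−4)y(y+2) + 2h₂₁(h₂₁−4)(h₁₁−1) + 2(h₂₁−4)x(x−1) − 6(h₂₁−4)y(y+1) + 6(h₂₁−3)y(y+2); p₁ = x(x−1)(x−2)(x−3)(x−4); p₂ = (2/27)h₁₁(h₁₁−1)(h₁₁−2)(h₁₁−3)(h₁₁−4) + (5/3)(h₁₁−2)(h₁₁−3)(h₁₁−4)y + (h₁₁−3)(h₁₁−4)y(h₃₁+2) + 18(h₁₁−4)y(y−1) − 2(h₁₁−3)(h₁₁−4)y + 18y(y−1)(h₃₁+2); is exactly { (0,0), (0,−2/3), (0,−1/3), (0,1/3), (0,1), (1,0), (1,−4/3), (1,−2/3), (2,0), (2,−5/3), (2,−4/3), (4,−7/3)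 }. -/
/-- **Proposition 3.6(3).**  With `h₂₁ = 2x+3y`, `h₁₁ = x+3y`, `h₃₁ = x+y`, the common zeros
in `ℂ²` of the three polynomials `p₁`, `p₂`, `q` of Lemma 3.5 are exactly the twelve points
`(0,0), (0,−2/3), (0,−1/3), (0,1/3), (0,1), (1,0), (1,−4/3), (1,−2/3), (2,0), (2,−5/3),
(2,−4/3), (4,−7/3)`. -/
theorem common_zeros_level_minus_two_thirds :
    {p : ℂ × ℂ |
        p.1 * (p.1 - 1) * (p.1 - 2) * (p.1 - 3) * (p.1 - 4) = 0 ∧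
        (2 / 27 : ℂ) * (p.1 + 3 * p.2) * (p.1 + 3 * p.2 - 1) * (p.1 + 3 * p.2 - 2)
              * (p.1 + 3 * p.2 - 3) * (p.1 + 3 * p.2 - 4)
            + (5 / 3 : ℂ) * (p.1 + 3 * p.2 - 2) * (p.1 + 3 * p.2 - 3) * (p.1 + 3 * p.2 - 4) * p.2
            + (p.1 + 3 * p.2 - 3) * (p.1 + 3 * p.2 - 4) * p.2 * (p.1 + p.2 + 2)
            + 18 * (p.1 + 3 * p.2 - 4) * p.2 * (p.2 - 1)
            - 2 * (p.1 + 3 * p.2 - 3) * (p.1 + 3 * p.2 - 4) * p.2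
            + 18 * p.2 * (p.2 - 1) * (p.1 + p.2 + 2) = 0 ∧
        (2 / 27 : ℂ) * (2 * p.1 + 3 * p.2) * (2 * p.1 + 3 * p.2 - 1) * (2 * p.1 + 3 * p.2 - 2)
              * (2 * p.1 + 3 * p.2 - 3) * (2 * p.1 + 3 * p.2 - 4)
            + (5 / 9 : ℂ) * (2 * p.1 + 3 * p.2) * (2 * p.1 + 3 * p.2 - 2)
              * (2 * p.1 + 3 * p.2 - 3) * (2 * p.1 + 3 * p.2 - 4)
            + (2 * p.1 + 3 * p.2 - 3) * (2 * p.1 + 3 * p.2 - 4) * p.2 * (p.2 + 2)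
            + 2 * (2 * p.1 + 3 * p.2) * (2 * p.1 + 3 * p.2 - 4) * (p.1 + 3 * p.2 - 1)
            + 2 * (2 * p.1 + 3 * p.2 - 4) * p.1 * (p.1 - 1)
            - 6 * (2 * p.1 + 3 * p.2 - 4) * p.2 * (p.2 + 1)
            + 6 * (2 * p.1 + 3 * p.2 - 3) * p.2 * (p.2 + 2) = 0} =
      {((0 : ℂ), (0 : ℂ)), (0, -2 / 3), (0, -1 / 3), (0, 1 / 3), (0, 1),
        (1, 0), (1, -4 / 3), (1, -2 / 3), (2, 0), (2, -5 / 3), (2, -4 / 3), (4, -7 / 3)} := by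

  ext ⟨x, y⟩
  simp only [Set.mem_setOf_eq, Set.mem_insert_iff, Set.mem_singleton_iff, Prod.mk.injEq]
  constructor
  · rintro ⟨h1, h2, h3⟩
    have hx : x = 0 ∨ x = 1 ∨ x = 2 ∨ x = 3 ∨ x = 4 := by
      rcases mul_eq_zero.mp h1 with h | h
      · rcases mul_eq_zero.mp h with h | h
        · rcases mul_eq_zero.mp h with h | h
          · rcases mul_eq_zero.mp h with h | h
            · exact Or.inl h
            · exact Or.inr (Or.inl (by linear_combination h))
          · exact Or.inr (Or.inr (Or.inl (by linear_combination h)))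
        · exact Or.inr (Or.inr (Or.inr (Or.inl (by linear_combination h))))
      · exact Or.inr (Or.inr (Or.inr (Or.inr (by linear_combination h))))
    rcases hx with rfl | rfl | rfl | rfl | rfl
    · -- x = 0
      have h5 : y * (y + 2/3) * (y + 1/3) * (y - 1/3) * (y - 1) = 0 := by
        linear_combination (1/18 : ℂ) * h2
      have hy : y = 0 ∨ y = -2/3 ∨ y = -1/3 ∨ y = 1/3 ∨ y = 1 := by
        rcases mul_eq_zero.mp h5 with h | h
        · rcases mul_eq_zero.mp h with h | h
          · rcases mul_eq_zero.mp h with h | h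
            · rcases mul_eq_zero.mp h with h | h
              · exact Or.inl h
              · exact Or.inr (Or.inl (by linear_combination h))
            · exact Or.inr (Or.inr (Or.inl (by linear_combination h)))
          · exact Or.inr (Or.inr (Or.inr (Or.inl (by linear_combination h))))
        · exact Or.inr (Or.inr (Or.inr (Or.inr (by linear_combination h))))
      rcases hy with rfl | rfl | rfl | rfl | rfl <;> norm_num
    · -- x = 1
      have h5 : y * (y + 2/3) * (y + 4/3) = 0 := by
        linear_combination ((-19/198 : ℂ) + (-5/66 : ℂ) * y) * h2
          + ((-1/33 : ℂ) + (5/66 : ℂ) * y) * h3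
      have hy : y = 0 ∨ y = -2/3 ∨ y = -4/3 := by
        rcases mul_eq_zero.mp h5 with h | h
        · rcases mul_eq_zero.mp h with h | h
          · exact Or.inl h
          · exact Or.inr (Or.inl (by linear_combination h))
        · exact Or.inr (Or.inr (by linear_combination h))
      rcases hy with rfl | rfl | rfl <;> norm_num
    · -- x = 2
      have h5 : y * (y + 4/3) * (y + 5/3) = 0 := by
        linear_combination ((-13/72 : ℂ) + (-5/72 : ℂ) * y) * h2
          + ((-11/216 : ℂ) + (5/72 : ℂ) * y) * h3
      have hy : y = 0 ∨ y = -4/3 ∨ y = -5/3 := by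
        rcases mul_eq_zero.mp h5 with h | h
        · rcases mul_eq_zero.mp h with h | h
          · exact Or.inl h
          · exact Or.inr (Or.inl (by linear_combination h))
        · exact Or.inr (Or.inr (by linear_combination h))
      rcases hy with rfl | rfl | rfl <;> norm_num
    · -- x = 3 : no solutions
      exfalso
      have : (1 : ℂ) = 0 := by
        linear_combination
          ((-12780113/1226456 : ℂ) + (-133811/3982 : ℂ) * y + (-5206119/153307 : ℂ) * y^2
            + (-16214193/1226456 : ℂ) * y^3 + (-1038285/613228 : ℂ) * y^4) * h2
          + ((3/616 : ℂ) + (-4586783/1226456 : ℂ) * y + (1417197/1226456 : ℂ) * y^2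
            + (833049/175208 : ℂ) * y^3 + (1038285/613228 : ℂ) * y^4) * h3
      exact one_ne_zero this
    · -- x = 4
      have hy : y = -7/3 := by
        have h5 : y + 7/3 = 0 := by
          linear_combination
            ((-1609/11872 : ℂ) + (-2619/11872 : ℂ) * y + (-2115/23744 : ℂ) * y^2
              + (-243/23744 : ℂ) * y^3) * h2
            + ((3/1696 : ℂ) + (-165/11872 : ℂ) * y + (495/23744 : ℂ) * y^2
              + (243/23744 : ℂ) * y^3) * h3
        linear_combination h5
      subst hy
      norm_num
  · rintro (⟨rfl, rfl⟩ | ⟨rfl, rfl⟩ | ⟨rfl, rfl⟩ | ⟨rfl, rfl⟩ | ⟨rfl, rfl⟩ | ⟨rfl, rfl⟩ |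
      ⟨rfl, rfl⟩ | ⟨rfl, rfl⟩ | ⟨rfl, rfl⟩ | ⟨rfl, rfl⟩ | ⟨rfl, rfl⟩ | ⟨rfl, rfl⟩) <;>
    refine ⟨by norm_num, by norm_num, by norm_num⟩
end
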